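/- For any ε > 0, M > 0, and any request sequence r, the number of values of k satisfying both m(k,r) ≤ M and L(k,r) ≥ ε·L(1,r) is at most (⌈2M⌉)·(1 + log_{4/3}(1/ε)). -/

import Mathlib

/-- Length of the maximal prefix of `r` containing at most `k` distinct items. -/
def maxPrefixLen {α : Type*} [DecidableEq α] (k : ℕ) (r : List α) : ℕ :=
  ((List.range (r.length + 1)).filter (fun n => (r.take n).dedup.length ≤ k)).foldr max 0

/-- Greedy phase partition, with fuel for termination. -/
def phasesAux {α : Type*} [DecidableEq α] (k : ℕ) : ℕ → List α → List (List α)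
  | 0, _ => []
  | _, [] => []
  | (fuel+1), r =>
      let n := max 1 (maxPrefixLen k r)
      r.take n :: phasesAux k fuel (r.drop n)

/-- The `k`-phase partition of `r`: greedy maximal consecutive blocks, each
containing requests to at most `k` distinct items. -/
def phases {α : Type*} [DecidableEq α] (k : ℕ) (r : List α) : List (List α) :=
  phasesAux k r.length r

/-- `L(k,r)`: the number of `k`-phases of `r`, minus 1. -/
def numPhases {α : Type*} [DecidableEq α] (k : ℕ) (r : List α) : ℕ :=
  (phases k r).length - 1

/-- For each `k`-phase other than the first, the number of new requests:
items requested in the phase but not in the previous phase. -/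
def newCounts {α : Type*} [DecidableEq α] (k : ℕ) (r : List α) : List ℕ :=
  ((phases k r).zip (phases k r).tail).map
    (fun p => (p.2.dedup.filter (fun x => x ∉ p.1)).length)

/-- `m(k,r)`: the average number of new requests per `k`-phase (other than the first). -/
noncomputable def avgNew {α : Type*} [DecidableEq α] (k : ℕ) (r : List α) : ℝ :=
  ((newCounts k r).sum : ℝ) / (numPhases k r : ℝ)

/-- Index in `r` at which the `i`-th `k`-phase starts. -/
def phaseStart {α : Type*} [DecidableEq α] (k : ℕ) (r : List α) (i : ℕ) : ℕ :=
  (((phases k r).take i).map List.length).sum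

namespace PhaseProof

lemma le_foldr_max {l : List ℕ} {x : ℕ} (h : x ∈ l) : x ≤ l.foldr max 0 := by
  induction l with
  | nil => cases h
  | cons a t ih =>
    simp only [List.foldr_cons]
    rcases List.mem_cons.1 h with h | h
    · subst h; exact le_max_left _ _
    · exact le_trans (ih h) (le_max_right _ _)

lemma foldr_max_mem (l : List ℕ) : l.foldr max 0 ∈ l ∨ l.foldr max 0 = 0 := by
  induction l with
  | nil => right; rfl
  | cons a t ih =>
    simp only [List.foldr_cons]
    rcases le_or_gt (t.foldr max 0) a with h | h
    · left
      have : max a (t.foldr max 0) = a := by omega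
      rw [this]; exact List.mem_cons_self
    · have : max a (t.foldr max 0) = t.foldr max 0 := by omega
      rw [this]
      rcases ih with h' | h'
      · left; exact List.mem_cons_of_mem _ h'
      · right; exact h' 

variable {α : Type*} [DecidableEq α]

lemma mpl_le_length (k : ℕ) (r : List α) : maxPrefixLen k r ≤ r.length := by
  unfold maxPrefixLen
  rcases foldr_max_mem ((List.range (r.length + 1)).filter
      (fun n => (r.take n).dedup.length ≤ k)) with h | h
  · have := List.mem_range.1 (List.mem_of_mem_filter h); omega
  · omega

lemma dedup_take_mpl_le (k : ℕ) (r : List α) :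
    (r.take (maxPrefixLen k r)).dedup.length ≤ k := by
  show (r.take (((List.range (r.length + 1)).filter
      (fun n => (r.take n).dedup.length ≤ k)).foldr max 0)).dedup.length ≤ k
  rcases foldr_max_mem ((List.range (r.length + 1)).filter
      (fun n => (r.take n).dedup.length ≤ k)) with h | h
  · have := List.of_mem_filter h
    simpa using this
  · rw [h]; simp

lemma le_mpl {k n : ℕ} {r : List α} (h1 : n ≤ r.length)
    (h2 : (r.take n).dedup.length ≤ k) : n ≤ maxPrefixLen k r := by
  apply le_foldr_max
  apply List.mem_filter.2
  constructor
  · exact List.mem_range.2 (by omega)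
  · simpa using h2

lemma mpl_maximal {k : ℕ} {r : List α} (h : maxPrefixLen k r < r.length) :
    k < (r.take (maxPrefixLen k r + 1)).dedup.length := by
  by_contra hc
  push_neg at hc
  have := le_mpl (k := k) (n := maxPrefixLen k r + 1) (r := r) (by omega) hc
  omega

lemma one_le_mpl {k : ℕ} {r : List α} (hk : 1 ≤ k) (hr : r ≠ []) :
    1 ≤ maxPrefixLen k r := by
  apply le_mpl
  · have : 0 < r.length := List.length_pos_iff.2 hr
    omega
  · calc (r.take 1).dedup.length ≤ (r.take 1).length :=
          List.Sublist.length_le (List.dedup_sublist _)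
    _ ≤ 1 := by simp
    _ ≤ k := hk

lemma phasesAux_congr (k : ℕ) : ∀ (f1 f2 : ℕ) (r : List α), r.length ≤ f1 → r.length ≤ f2 →
    phasesAux k f1 r = phasesAux k f2 r := by
  intro f1
  induction f1 using Nat.strong_induction_on with
  | _ f1 ih =>
    intro f2 r h1 h2
    match r, f1, f2 with
    | [], f1, f2 => cases f1 <;> cases f2 <;> rfl
    | (a :: t), (g1+1), (g2+1) =>
      simp only [phasesAux]
      have hmax : 1 ≤ max 1 (maxPrefixLen k (a :: t)) := le_max_left _ _
      have hlen : ((a :: t).drop (max 1 (maxPrefixLen k (a :: t)))).length ≤ g1 := by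
        rw [List.length_drop]
        simp only [List.length_cons] at h1 ⊢
        omega
      have hlen2 : ((a :: t).drop (max 1 (maxPrefixLen k (a :: t)))).length ≤ g2 := by
        rw [List.length_drop]
        simp only [List.length_cons] at h2 ⊢
        omega
      rw [ih g1 (by omega) g2 _ hlen hlen2]

lemma phases_cons {k : ℕ} {r : List α} (hr : r ≠ []) :
    phases k r = r.take (max 1 (maxPrefixLen k r)) ::
      phases k (r.drop (max 1 (maxPrefixLen k r))) := by
  obtain ⟨a, t, rfl⟩ : ∃ a t, r = a :: t := by
    cases r with
    | nil => exact absurd rfl hr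
    | cons a t => exact ⟨a, t, rfl⟩
  show phasesAux k ((a :: t).length) (a :: t) = _
  rw [show (a :: t).length = t.length + 1 from rfl]
  show (a :: t).take _ :: phasesAux k t.length ((a :: t).drop _) = _
  congr 1
  unfold phases
  apply phasesAux_congr
  · rw [List.length_drop]
    have hmax : 1 ≤ max 1 (maxPrefixLen k (a :: t)) := le_max_left _ _
    simp only [List.length_cons]
    omega
  · exact le_refl _


/-- One greedy step: position of the start of the next phase. -/
def step (k : ℕ) (r : List α) (a : ℕ) : ℕ := a + max 1 (maxPrefixLen k (r.drop a))

/-- Segment `[a, b)` of `r`. -/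
def seg (r : List α) (a b : ℕ) : List α := (r.drop a).take (b - a)

/-- Set of items occurring in segment `[a, b)`. -/
def Fs (r : List α) (a b : ℕ) : Finset α := (seg r a b).toFinset

lemma lt_step (k : ℕ) (r : List α) (a : ℕ) : a < step k r a := by
  have : 1 ≤ max 1 (maxPrefixLen k (r.drop a)) := le_max_left _ _
  unfold step; omega

lemma step_le_length {k a : ℕ} {r : List α} (hk : 1 ≤ k) (h : a < r.length) :
    step k r a ≤ r.length := by
  have h1 : maxPrefixLen k (r.drop a) ≤ (r.drop a).length := mpl_le_length _ _
  rw [List.length_drop] at h1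
  have h2 : 1 ≤ maxPrefixLen k (r.drop a) := by
    apply one_le_mpl hk
    intro hc
    have := congrArg List.length hc
    rw [List.length_drop] at this
    simp at this
    omega
  unfold step
  omega

lemma step_eq {k a : ℕ} {r : List α} (hk : 1 ≤ k) (h : a < r.length) :
    step k r a = a + maxPrefixLen k (r.drop a) := by
  have h2 : 1 ≤ maxPrefixLen k (r.drop a) := by
    apply one_le_mpl hk
    intro hc
    have := congrArg List.length hc
    rw [List.length_drop] at this
    simp at this
    omega
  unfold step
  omega

lemma phases_drop {k a : ℕ} {r : List α} (hk : 1 ≤ k) (h : a < r.length) :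
    phases k (r.drop a) =
      seg r a (step k r a) :: phases k (r.drop (step k r a)) := by
  have hne : r.drop a ≠ [] := by
    intro hc
    have := congrArg List.length hc
    rw [List.length_drop] at this
    simp at this
    omega
  rw [phases_cons hne]
  have h2 : 1 ≤ maxPrefixLen k (r.drop a) := one_le_mpl hk hne
  have hmax : max 1 (maxPrefixLen k (r.drop a)) = maxPrefixLen k (r.drop a) :=
    max_eq_right h2
  have hm : max 1 (maxPrefixLen k (r.drop a)) = step k r a - a := by
    unfold step; rw [hmax]; omega
  rw [hm]
  congr 1
  rw [List.drop_drop, show a + (step k r a - a) = step k r a from by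
    have := lt_step k r a; omega]

lemma phases_drop_nil {k a : ℕ} {r : List α} (h : r.length ≤ a) :
    phases k (r.drop a) = [] := by
  have : r.drop a = [] := List.drop_eq_nil_of_le h
  rw [this]
  rfl

lemma seg_infix {a' b' a b : ℕ} (r : List α) (ha : a ≤ a') (hb : b' ≤ b) :
    seg r a' b' <:+: seg r a b := by
  rcases le_or_gt b' a' with h | h
  · have : b' - a' = 0 := by omega
    unfold seg
    rw [this]
    simp
  · unfold seg
    have h1 : r.drop a' = (r.drop a).drop (a' - a) := by
      rw [List.drop_drop]; congr 1; omega
    rw [h1]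
    have h2 : ((r.drop a).drop (a' - a)).take (b' - a')
        = (((r.drop a).take (b - a)).drop (a' - a)).take (b' - a') := by
      rw [List.drop_take, List.take_take, min_eq_left (by omega : b' - a' ≤ b - a - (a' - a))]
    rw [h2]
    exact ((List.take_prefix _ _).isInfix).trans ((List.drop_suffix _ _).isInfix)

lemma Fs_mono {a' b' a b : ℕ} (r : List α) (ha : a ≤ a') (hb : b' ≤ b) :
    Fs r a' b' ⊆ Fs r a b := by
  intro x hx
  rw [Fs, List.mem_toFinset] at hx ⊢
  exact (seg_infix r ha hb).subset hx

lemma Fs_card (r : List α) (a b : ℕ) : (Fs r a b).card = (seg r a b).dedup.length :=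
  List.card_toFinset _

lemma Fs_card_phase_le {k a : ℕ} {r : List α} (hk : 1 ≤ k) :
    (Fs r a (step k r a)).card ≤ k := by
  rcases le_or_gt r.length a with h | h
  · have : seg r a (step k r a) = [] := by
      unfold seg
      rw [List.drop_eq_nil_of_le h]
      simp
    rw [Fs, this]
    simp
  · rw [Fs_card]
    have he : step k r a - a = maxPrefixLen k (r.drop a) := by
      rw [step_eq hk h]; omega
    unfold seg
    rw [he]
    exact dedup_take_mpl_le _ _

lemma seg_split {a m b : ℕ} (r : List α) (ha : a ≤ m) (hb : m ≤ b) :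
    seg r a b = seg r a m ++ seg r m b := by
  unfold seg
  have e : b - a = (m - a) + (b - m) := by omega
  rw [e, List.take_add]
  congr 1
  rw [List.drop_drop, show a + (m - a) = m from by omega]

lemma Fs_split {a m b : ℕ} (r : List α) (ha : a ≤ m) (hb : m ≤ b) :
    Fs r a b = Fs r a m ∪ Fs r m b := by
  unfold Fs
  rw [seg_split r ha hb, List.toFinset_append]


lemma mpl_nil (k : ℕ) : maxPrefixLen k ([] : List α) = 0 := by
  unfold maxPrefixLen
  simp

lemma step_of_len_le {k a : ℕ} {r : List α} (h : r.length ≤ a) : step k r a = a + 1 := by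
  unfold step
  rw [List.drop_eq_nil_of_le h, mpl_nil]
  simp

lemma toFinset_take_succ {X : List α} {n : ℕ} (h : n < X.length) :
    (X.take (n+1)).toFinset = insert X[n] (X.take n).toFinset := by
  rw [List.take_succ, List.getElem?_eq_getElem h, List.toFinset_append]
  ext y
  simp [or_comm]

lemma seg_step_eq_take {k a : ℕ} {r : List α} (hk : 1 ≤ k) (ha : a < r.length) :
    seg r a (step k r a) = (r.drop a).take (maxPrefixLen k (r.drop a)) := by
  unfold seg
  rw [step_eq hk ha]
  congr 1
  omega

lemma card_phase_eq {k a : ℕ} {r : List α} (hk : 1 ≤ k) (ha : a < r.length)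
    (hb : step k r a < r.length) : (Fs r a (step k r a)).card = k := by
  set X := r.drop a with hX
  set n := maxPrefixLen k X with hn
  have hstep : step k r a = a + n := step_eq hk ha
  have hnlt : n < X.length := by
    rw [hX, List.length_drop]
    omega
  have hupper : (Fs r a (step k r a)).card ≤ k := Fs_card_phase_le hk
  have hmax : k < (X.take (n + 1)).dedup.length := mpl_maximal hnlt
  have h1 : (X.take (n+1)).dedup.length = (X.take (n+1)).toFinset.card :=
    (List.card_toFinset _).symm
  have h2 : (X.take (n+1)).toFinset.card ≤ (X.take n).toFinset.card + 1 := by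
    rw [toFinset_take_succ hnlt]
    exact Finset.card_insert_le _ _
  have h3 : Fs r a (step k r a) = (X.take n).toFinset := by
    unfold Fs
    rw [seg_step_eq_take hk ha]
  have h4 : (Fs r a (step k r a)).card = (X.take n).toFinset.card := by rw [h3]
  omega

lemma head_new {k a : ℕ} {r : List α} (hk : 1 ≤ k) (ha : a < r.length)
    (hb : step k r a < r.length) :
    ∃ x, x ∈ Fs r (step k r a) (step k r (step k r a)) ∧ x ∉ Fs r a (step k r a) := by
  have hstep : step k r a = a + maxPrefixLen k (r.drop a) := step_eq hk ha
  have hnlt : maxPrefixLen k (r.drop a) < (r.drop a).length := by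
    rw [List.length_drop]
    omega
  refine ⟨(r.drop a)[maxPrefixLen k (r.drop a)], ?_, ?_⟩
  · have hb1 : step k r a < r.length := hb
    have hxr : (r.drop a)[maxPrefixLen k (r.drop a)]'hnlt = r[step k r a]'hb1 := by
      rw [List.getElem_drop]
      congr 1
      omega
    have hlen : 0 < (seg r (step k r a) (step k r (step k r a))).length := by
      unfold seg
      rw [List.length_take, List.length_drop]
      have h5 : step k r a < step k r (step k r a) := lt_step _ _ _
      simp only [lt_min_iff]
      omega
    have hget : (seg r (step k r a) (step k r (step k r a)))[0]'hlen
        = r[step k r a]'hb1 := by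
      simp [seg]
    rw [Fs, List.mem_toFinset, hxr, ← hget]
    exact List.getElem_mem _
  · intro hmem
    rw [Fs, List.mem_toFinset, seg_step_eq_take hk ha] at hmem
    have hins : ((r.drop a).take (maxPrefixLen k (r.drop a) + 1)).toFinset
        = ((r.drop a).take (maxPrefixLen k (r.drop a))).toFinset := by
      rw [toFinset_take_succ hnlt]
      exact Finset.insert_eq_self.2 (List.mem_toFinset.2 hmem)
    have hmax : k < ((r.drop a).take (maxPrefixLen k (r.drop a) + 1)).dedup.length :=
      mpl_maximal hnlt
    have h1 : ((r.drop a).take (maxPrefixLen k (r.drop a) + 1)).dedup.length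
        = ((r.drop a).take (maxPrefixLen k (r.drop a) + 1)).toFinset.card :=
      (List.card_toFinset _).symm
    have h2 : ((r.drop a).take (maxPrefixLen k (r.drop a))).toFinset.card
        = ((r.drop a).take (maxPrefixLen k (r.drop a))).dedup.length := List.card_toFinset _
    have h3 : ((r.drop a).take (maxPrefixLen k (r.drop a))).dedup.length ≤ k :=
      dedup_take_mpl_le _ _
    rw [h1, hins, h2] at hmax
    omega

/-- Sum over consecutive pairs of the number of new items. -/
def pairSum (l : List (List α)) : ℕ :=
  ((l.zip l.tail).map (fun p => (p.2.toFinset \ p.1.toFinset).card)).sum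

lemma newCount_eq (p q : List α) :
    (q.dedup.filter (fun x => x ∉ p)).length = (q.toFinset \ p.toFinset).card := by
  have h1 : (q.dedup.filter (fun x => x ∉ p)).Nodup := (List.nodup_dedup q).filter _
  rw [← List.toFinset_card_of_nodup h1, List.toFinset_filter]
  congr 1
  ext x
  simp [List.mem_toFinset]

lemma newCounts_sum_eq (k : ℕ) (r : List α) :
    (newCounts k r).sum = pairSum (phases k r) := by
  unfold newCounts pairSum
  congr 1
  apply List.map_congr_left
  intro p _
  exact newCount_eq p.1 p.2

lemma pairSum_cons (p q : List α) (t : List (List α)) :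
    pairSum (p :: q :: t) = (q.toFinset \ p.toFinset).card + pairSum (q :: t) := by
  rfl

lemma pairSum_single (p : List α) : pairSum [p] = 0 := rfl

lemma pairSum_nil : pairSum ([] : List (List α)) = 0 := rfl

/-- Total number of new items over all phases starting from position `a`. -/
def gFrom (k : ℕ) (r : List α) (a : ℕ) : ℕ := pairSum (phases k (r.drop a))

lemma gFrom_rec {k a : ℕ} {r : List α} (hk : 1 ≤ k) (ha : a < r.length)
    (hb : step k r a < r.length) :
    gFrom k r a = (Fs r (step k r a) (step k r (step k r a)) \ Fs r a (step k r a)).card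
      + gFrom k r (step k r a) := by
  unfold gFrom
  rw [phases_drop hk ha, phases_drop hk hb, pairSum_cons]
  rfl

lemma gFrom_zero {k a : ℕ} {r : List α} (hk : 1 ≤ k) (hb : ¬ step k r a < r.length) :
    gFrom k r a = 0 := by
  unfold gFrom
  rcases lt_or_ge a r.length with ha | ha
  · rw [phases_drop hk ha, phases_drop_nil (by omega), pairSum_single]
  · rw [phases_drop_nil ha, pairSum_nil]

/-- Iterated phase starts. -/
def stIt (k : ℕ) (r : List α) (c j : ℕ) : ℕ := (step k r)^[j] c

lemma stIt_zero (k : ℕ) (r : List α) (c : ℕ) : stIt k r c 0 = c := rfl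

lemma stIt_succ (k : ℕ) (r : List α) (c j : ℕ) :
    stIt k r c (j+1) = step k r (stIt k r c j) :=
  Function.iterate_succ_apply' _ _ _

lemma stIt_lt_succ (k : ℕ) (r : List α) (c j : ℕ) :
    stIt k r c j < stIt k r c (j+1) := by
  rw [stIt_succ]
  exact lt_step _ _ _

lemma le_stIt (k : ℕ) (r : List α) (c j : ℕ) : c ≤ stIt k r c j := by
  induction j with
  | zero => exact le_refl _
  | succ j ih => exact le_trans ih (le_of_lt (stIt_lt_succ _ _ _ _))

lemma stIt_mono (k : ℕ) (r : List α) (c : ℕ) {i j : ℕ} (h : i ≤ j) :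
    stIt k r c i ≤ stIt k r c j := by
  induction j with
  | zero => simp at h; rw [h]
  | succ j ih =>
    rcases Nat.lt_or_ge i (j+1) with h' | h'
    · exact le_trans (ih (by omega)) (le_of_lt (stIt_lt_succ _ _ _ _))
    · have : i = j + 1 := by omega
      rw [this]

lemma add_le_stIt (k : ℕ) (r : List α) (c j : ℕ) : c + j ≤ stIt k r c j := by
  induction j with
  | zero => simp [stIt_zero]
  | succ j ih =>
    have := stIt_lt_succ k r c j
    omega

/-- Number of new items of the `(t+1)`-st phase after `c`, relative to the previous. -/
def dNew (k : ℕ) (r : List α) (c t : ℕ) : ℕ :=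
  ((Fs r (stIt k r c (t+1)) (stIt k r c (t+2))) \ (Fs r (stIt k r c t) (stIt k r c (t+1)))).card

def gPart (k : ℕ) (r : List α) (c j : ℕ) : ℕ := ∑ t ∈ Finset.range j, dNew k r c t

lemma acc {k c : ℕ} {r : List α} (hk : 1 ≤ k) :
    ∀ j, stIt k r c j < r.length → gFrom k r c = gPart k r c j + gFrom k r (stIt k r c j) := by
  intro j
  induction j with
  | zero =>
    intro _
    rw [stIt_zero]
    simp [gPart]
  | succ j ih =>
    intro h
    have hj : stIt k r c j < r.length := lt_trans (stIt_lt_succ _ _ _ _) h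
    rw [ih hj]
    have hrec := gFrom_rec hk hj (by rw [← stIt_succ]; exact h)
    rw [hrec]
    have e1 : step k r (stIt k r c j) = stIt k r c (j+1) := (stIt_succ _ _ _ _).symm
    have e2 : step k r (step k r (stIt k r c j)) = stIt k r c (j+2) := by
      rw [e1, ← stIt_succ]
    rw [e1, ← stIt_succ]
    unfold gPart
    rw [Finset.sum_range_succ]
    unfold dNew
    ring

lemma window {k c : ℕ} {r : List α} (hk : 1 ≤ k) :
    ∀ j b, b ≤ stIt k r c (j+1) → (Fs r c b).card ≤ k + gPart k r c j := by
  intro j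
  induction j with
  | zero =>
    intro b hb
    have h1 : Fs r c b ⊆ Fs r c (step k r c) := by
      apply Fs_mono r (le_refl _)
      rw [stIt_succ, stIt_zero] at hb
      exact hb
    have := Fs_card_phase_le (r := r) (a := c) hk
    have h2 : gPart k r c 0 = 0 := by simp [gPart]
    have := Finset.card_le_card h1
    omega
  | succ j ih =>
    intro b hb
    by_cases hble : b ≤ stIt k r c (j+1)
    · have h1 := ih b hble
      have h2 : gPart k r c j ≤ gPart k r c (j+1) := by
        unfold gPart
        rw [Finset.sum_range_succ]
        omega
      omega
    · push_neg at hble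
      set m := stIt k r c (j+1) with hm
      have hcm : c ≤ m := le_stIt _ _ _ _
      have hsplit : Fs r c b = Fs r c m ∪ Fs r m b :=
        Fs_split r hcm (le_of_lt hble)
      have hcard : (Fs r c b).card ≤ (Fs r c m).card + (Fs r m b \ Fs r c m).card := by
        rw [hsplit, ← Finset.union_sdiff_self_eq_union]
        exact Finset.card_union_le _ _
      have h1 : (Fs r c m).card ≤ k + gPart k r c j := ih m (le_refl _)
      have h2 : (Fs r m b \ Fs r c m).card ≤ dNew k r c (j+1-1) := by
        unfold dNew
        apply Finset.card_le_card
        apply Finset.sdiff_subset_sdiff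
        · exact Fs_mono r (le_refl _) (by simpa using hb)
        · exact Fs_mono r (le_stIt _ _ _ _) (le_refl _)
      simp only [Nat.add_sub_cancel] at h2
      have h3 : gPart k r c (j+1) = gPart k r c j + dNew k r c j := by
        unfold gPart
        rw [Finset.sum_range_succ]
      omega


lemma phases_len_le_one {k a : ℕ} {r : List α} (hk : 1 ≤ k)
    (hb : ¬ step k r a < r.length) : (phases k (r.drop a)).length ≤ 1 := by
  rcases lt_or_ge a r.length with ha | ha
  · rw [phases_drop hk ha, phases_drop_nil (by omega)]
    simp
  · rw [phases_drop_nil ha]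
    simp

lemma main_bound {k k' : ℕ} {r : List α} (hk : 1 ≤ k) (hkk : k ≤ k') :
    ∀ N a c, r.length - a ≤ N → c ≤ a →
      (k' - k) * ((phases k' (r.drop a)).length - 1) ≤ gFrom k r c := by
  have hk' : 1 ≤ k' := le_trans hk hkk
  intro N
  induction N with
  | zero =>
    intro a c hN hca
    have ha : r.length ≤ a := by omega
    rw [phases_drop_nil (k := k') (r := r) ha]
    simp
  | succ N ih =>
    intro a c hN hca
    by_cases hb : step k' r a < r.length
    · have ha : a < r.length := by
        by_contra hc
        push_neg at hc
        rw [step_of_len_le hc] at hb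
        omega
      -- j := minimal with b ≤ stIt k r c (j+1)
      set b := step k' r a with hbdef
      have hex : ∃ j, b ≤ stIt k r c (j + 1) := by
        refine ⟨b, ?_⟩
        have := add_le_stIt k r c (b + 1)
        omega
      set j := Nat.find hex with hj
      have hj1 : b ≤ stIt k r c (j + 1) := Nat.find_spec hex
      have hc'b : stIt k r c j < b := by
        rcases Nat.eq_zero_or_pos j with h0 | hpos
        · rw [h0, stIt_zero]
          have := lt_step k' r a
          omega
        · have hjeq : j - 1 + 1 = j := by omega
          have hmin := Nat.find_min hex (m := j - 1) (by omega)
          rw [hjeq] at hmin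
          omega
      have hc'len : stIt k r c j < r.length := lt_trans hc'b hb
      -- window bound
      have hwin : (Fs r c b).card ≤ k + gPart k r c j := window hk j b hj1
      have hcardeq : (Fs r a b).card = k' := card_phase_eq hk' ha hb
      have hsub : Fs r a b ⊆ Fs r c b := Fs_mono r hca (le_refl _)
      have hge : k' ≤ k + gPart k r c j := by
        have := Finset.card_le_card hsub
        omega
      -- recursion
      have hih := ih b (stIt k r c j) (by have := lt_step k' r a; omega) (le_of_lt hc'b)
      have hacc := acc hk j hc'len
      -- assemble
      rw [phases_drop hk' ha]
      have hlb : 1 ≤ (phases k' (r.drop b)).length := by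
        have hblen : b < r.length := hb
        rw [phases_drop hk' hblen]
        simp
      have e : (seg r a b :: phases k' (r.drop b)).length - 1
          = ((phases k' (r.drop b)).length - 1) + 1 := by
        simp only [List.length_cons]
        omega
      rw [e, Nat.mul_add, Nat.mul_one]
      have : k' - k ≤ gPart k r c j := by omega
      omega
    · rw [Nat.mul_comm]
      have h1 := phases_len_le_one hk' hb
      have : (phases k' (r.drop a)).length - 1 = 0 := by omega
      rw [this]
      simp

lemma key_ineq {k k' : ℕ} {r : List α} (hk : 1 ≤ k) (hkk : k ≤ k') :
    (k' - k) * numPhases k' r ≤ (newCounts k r).sum := by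
  have := main_bound (r := r) hk hkk r.length 0 0 (by omega) (le_refl _)
  rw [List.drop_zero] at this
  unfold numPhases
  rw [newCounts_sum_eq]
  unfold gFrom at this
  rw [List.drop_zero] at this
  exact this

lemma length_le_gFrom {k : ℕ} {r : List α} (hk : 1 ≤ k) :
    ∀ N a, r.length - a ≤ N → (phases k (r.drop a)).length - 1 ≤ gFrom k r a := by
  intro N
  induction N with
  | zero =>
    intro a hN
    rw [phases_drop_nil (k := k) (r := r) (a := a) (by omega)]
    simp
  | succ N ih =>
    intro a hN
    by_cases hb : step k r a < r.length
    · have ha : a < r.length := by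
        by_contra hc
        push_neg at hc
        rw [step_of_len_le hc] at hb
        omega
      have hrec := gFrom_rec hk ha hb
      obtain ⟨x, hx1, hx2⟩ := head_new hk ha hb
      have hpos : 1 ≤ (Fs r (step k r a) (step k r (step k r a)) \ Fs r a (step k r a)).card := by
        rw [Nat.one_le_iff_ne_zero, ← Nat.pos_iff_ne_zero, Finset.card_pos]
        exact ⟨x, Finset.mem_sdiff.2 ⟨hx1, hx2⟩⟩
      have hih := ih (step k r a) (by have := lt_step k r a; omega)
      rw [phases_drop hk ha, hrec]
      simp only [List.length_cons]
      omega
    · have h1 := phases_len_le_one hk hb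
      omega

lemma numPhases_le_newCounts_sum {k : ℕ} {r : List α} (hk : 1 ≤ k) :
    numPhases k r ≤ (newCounts k r).sum := by
  have := length_le_gFrom (r := r) hk r.length 0 (by omega)
  rw [List.drop_zero] at this
  unfold numPhases
  rw [newCounts_sum_eq]
  unfold gFrom at this
  rw [List.drop_zero] at this
  exact this

lemma step_mono {k k' a a' : ℕ} {r : List α} (hk : 1 ≤ k) (hkk : k ≤ k')
    (haa : a ≤ a') : step k r a ≤ step k' r a' := by
  have hk' : 1 ≤ k' := le_trans hk hkk
  by_cases h1 : step k r a ≤ a' + 1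
  · have := lt_step k' r a'
    omega
  · push_neg at h1
    have ha : a < r.length := by
      by_contra hc
      push_neg at hc
      rw [step_of_len_le hc] at h1
      omega
    have he : step k r a ≤ r.length := step_le_length hk ha
    have ha' : a' < r.length := by omega
    have hmpl : step k r a - a' ≤ maxPrefixLen k' (r.drop a') := by
      apply le_mpl
      · rw [List.length_drop]
        omega
      · have hseg : (r.drop a').take (step k r a - a') = seg r a' (step k r a) := rfl
        rw [hseg]
        have hsub : Fs r a' (step k r a) ⊆ Fs r a (step k r a) :=
          Fs_mono r haa (le_refl _)
        have hc1 : (Fs r a' (step k r a)).card ≤ k := by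
          have := Fs_card_phase_le (r := r) (a := a) hk
          have := Finset.card_le_card hsub
          omega
        rw [← Fs_card]
        omega
    have : step k' r a' = a' + max 1 (maxPrefixLen k' (r.drop a')) := rfl
    have hm : maxPrefixLen k' (r.drop a') ≤ max 1 (maxPrefixLen k' (r.drop a')) :=
      le_max_right _ _
    omega

lemma cnt_mono {k k' : ℕ} {r : List α} (hk : 1 ≤ k) (hkk : k ≤ k') :
    ∀ N a a', r.length - a' ≤ N → a ≤ a' →
      (phases k' (r.drop a')).length ≤ (phases k (r.drop a)).length := by
  have hk' : 1 ≤ k' := le_trans hk hkk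
  intro N
  induction N with
  | zero =>
    intro a a' hN haa
    rw [phases_drop_nil (k := k') (r := r) (a := a') (by omega)]
    simp
  | succ N ih =>
    intro a a' hN haa
    by_cases ha' : a' < r.length
    · have ha : a < r.length := by omega
      rw [phases_drop hk' ha', phases_drop hk ha]
      simp only [List.length_cons, Nat.add_le_add_iff_right]
      apply ih
      · have := lt_step k' r a'
        omega
      · exact step_mono hk hkk haa
    · rw [phases_drop_nil (k := k') (r := r) (a := a') (by omega)]
      simp

lemma numPhases_mono {k k' : ℕ} {r : List α} (hk : 1 ≤ k) (hkk : k ≤ k') :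
    numPhases k' r ≤ numPhases k r := by
  unfold numPhases
  have := cnt_mono (r := r) hk hkk r.length 0 0 (by omega) (le_refl _)
  rw [List.drop_zero] at this
  omega

lemma numPhases_eq_zero {k : ℕ} {r : List α} (hk : 1 ≤ k)
    (hD : r.dedup.length ≤ k) : numPhases k r = 0 := by
  unfold numPhases
  rcases eq_or_ne r [] with rfl | hr
  · rfl
  · have hlen : 0 < r.length := List.length_pos_iff.2 hr
    have hmpl : maxPrefixLen k r = r.length := by
      have h1 := mpl_le_length k r
      have h2 : r.length ≤ maxPrefixLen k r := by
        apply le_mpl (le_refl _)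
        rw [List.take_length]
        exact hD
      omega
    rw [phases_cons hr, hmpl]
    have hm : max 1 r.length = r.length := max_eq_right (by omega)
    rw [hm, List.drop_length]
    show ([r.take r.length] : List (List α)).length - 1 = 0
    rfl

lemma newCounts_eq_nil {k : ℕ} {r : List α} (h : (phases k r).length ≤ 1) :
    newCounts k r = [] := by
  unfold newCounts
  match hp : phases k r, h with
  | [], _ => rfl
  | [p], _ => rfl

end PhaseProof

open PhaseProof

/-- for any `ε ∈ (0,1]` and `M > 0`, the number of `k` with
`m(k,r) ≤ M` and `L(k,r) ≥ ε·L(1,r)` is at most `⌈2M⌉·(1 + log_{4/3}(1/ε))`. -/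
theorem few_phase_rich_low_new_values {α : Type*} [DecidableEq α] (r : List α)
    (ε M : ℝ) (hε : 0 < ε) (hε1 : ε ≤ 1) (hM : 0 < M) :
    ({k : ℕ | 0 < k ∧ avgNew k r ≤ M ∧
        ε * (numPhases 1 r : ℝ) ≤ (numPhases k r : ℝ)}.ncard : ℝ)
      ≤ (⌈2 * M⌉₊ : ℝ) * (1 + Real.logb (4 / 3) (1 / ε)) := by
  classical
  set S : Set ℕ := {k : ℕ | 0 < k ∧ avgNew k r ≤ M ∧
      ε * (numPhases 1 r : ℝ) ≤ (numPhases k r : ℝ)} with hSdef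
  have hinv : 1 ≤ 1/ε := one_le_one_div hε hε1
  have hlogb43 : 0 ≤ Real.logb (4/3) (1/ε) := Real.logb_nonneg (by norm_num) hinv
  have hRHS : 0 ≤ (⌈2 * M⌉₊ : ℝ) * (1 + Real.logb (4 / 3) (1 / ε)) := by
    apply mul_nonneg (Nat.cast_nonneg _)
    linarith
  -- trivial facts about large `k`
  have hbig : ∀ k : ℕ, 1 ≤ k → r.dedup.length ≤ k →
      numPhases k r = 0 ∧ avgNew k r = 0 := by
    intro k hk hD
    have h0 : numPhases k r = 0 := numPhases_eq_zero hk hD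
    refine ⟨h0, ?_⟩
    have hnil : newCounts k r = [] := by
      apply newCounts_eq_nil
      unfold numPhases at h0
      rcases Nat.eq_zero_or_pos (phases k r).length with h | h
      · omega
      · omega
    rw [avgNew, hnil]
    simp
  by_cases hL1 : numPhases 1 r = 0
  · -- the set is infinite, so its ncard is 0
    have hsub : Set.Ici (max 1 r.dedup.length) ⊆ S := by
      intro k hk
      rw [Set.mem_Ici] at hk
      have hk1 : 1 ≤ k := le_trans (le_max_left _ _) hk
      have hkD : r.dedup.length ≤ k := le_trans (le_max_right _ _) hk
      obtain ⟨h0, havg⟩ := hbig k hk1 hkD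
      refine ⟨by omega, by rw [havg]; linarith, ?_⟩
      rw [hL1, h0]
      simp
    have hinf : S.Infinite := (Set.Ici_infinite _).mono hsub
    rw [hinf.ncard]
    simpa using hRHS
  · have hL1p : 1 ≤ numPhases 1 r := by omega
    have hL1R : (1:ℝ) ≤ (numPhases 1 r : ℝ) := by exact_mod_cast hL1p
    -- every element of S gives a positive number of phases
    have hSpos : ∀ k ∈ S, 0 < numPhases k r := by
      intro k hk
      obtain ⟨hk0, _, hkL⟩ := hk
      by_contra hc
      push_neg at hc
      have h0 : numPhases k r = 0 := by omega
      rw [h0] at hkL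
      simp at hkL
      nlinarith
    have hSD : ∀ k ∈ S, k < r.dedup.length := by
      intro k hk
      by_contra hc
      push_neg at hc
      have := (hbig k hk.1 hc).1
      have := hSpos k hk
      omega
    set d := ⌈2 * M⌉₊ with hd
    have hd1 : 1 ≤ d := Nat.ceil_pos.2 (by linarith)
    have hdM : 2 * M ≤ (d : ℝ) := Nat.le_ceil _
    set B := ⌊Real.logb 2 (1/ε)⌋₊ with hB
    set F : Finset ℕ := (Finset.range r.dedup.length).filter (fun k => k ∈ S) with hF
    have hSF : S = ↑F := by
      ext k
      simp only [hF, Finset.coe_filter, Finset.mem_range, Set.mem_setOf_eq]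
      constructor
      · intro h
        exact ⟨hSD k h, h⟩
      · intro h
        exact h.2
    rw [hSF, Set.ncard_coe_finset]
    -- the doubling chain step
    have chain : ∀ k1 k2, k1 ∈ S → k2 ∈ S → k1 + d ≤ k2 →
        2 * (numPhases k2 r : ℝ) ≤ (numPhases k1 r : ℝ) := by
      intro k1 k2 hk1 hk2 h12
      have hk1p : 0 < k1 := hk1.1
      have h1 : numPhases k2 r ≤ numPhases (k1 + d) r :=
        numPhases_mono (by omega) h12
      have h2 : d * numPhases (k1 + d) r ≤ (newCounts k1 r).sum := by
        have := key_ineq (r := r) (k := k1) (k' := k1 + d) (by omega) (by omega)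
        rw [show k1 + d - k1 = d from by omega] at this
        exact this
      have hLk1 : (0:ℝ) < (numPhases k1 r : ℝ) := by
        exact_mod_cast hSpos k1 hk1
      have h3 : ((newCounts k1 r).sum : ℝ) ≤ M * (numPhases k1 r : ℝ) := by
        have havg := hk1.2.1
        rw [avgNew, div_le_iff₀ hLk1] at havg
        exact havg
      have h2R : (d:ℝ) * (numPhases (k1 + d) r : ℝ) ≤ ((newCounts k1 r).sum : ℝ) := by
        exact_mod_cast h2
      have h1R : (numPhases k2 r : ℝ) ≤ (numPhases (k1 + d) r : ℝ) := by
        exact_mod_cast h1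
      have hk2nn : (0:ℝ) ≤ (numPhases k2 r : ℝ) := Nat.cast_nonneg _
      nlinarith
    -- each residue class has at most B+1 elements
    have fib : ∀ j : ℕ, ((F.filter (fun k => k % d = j)).card ≤ B + 1) := by
      intro j
      set G := F.filter (fun k => k % d = j) with hG
      have hGS : ∀ k ∈ G, k ∈ S := by
        intro k hk
        rw [hG, Finset.mem_filter, hF, Finset.mem_filter] at hk
        exact hk.1.2
      have hGmod : ∀ k ∈ G, k % d = j := by
        intro k hk
        rw [hG, Finset.mem_filter] at hk
        exact hk.2
      -- iterated doubling bound
      have hpow : ∀ k, k ∈ G →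
          (2:ℝ) ^ ((G.filter (· < k)).card) * (numPhases k r : ℝ)
            ≤ (numPhases 1 r : ℝ) := by
        intro k
        induction k using Nat.strong_induction_on with
        | _ k ihk =>
          intro hkG
          rcases Finset.eq_empty_or_nonempty (G.filter (· < k)) with hemp | hne
          · rw [hemp]
            simp only [Finset.card_empty, pow_zero, one_mul]
            have : numPhases k r ≤ numPhases 1 r :=
              numPhases_mono (le_refl 1) (hGS k hkG).1
            exact_mod_cast this
          · obtain ⟨k2, hk2mem, hk2max⟩ :
                ∃ k2 ∈ G.filter (· < k), ∀ x ∈ G.filter (· < k), x ≤ k2 :=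
              ⟨_, Finset.max'_mem _ hne, fun x hx => Finset.le_max' _ x hx⟩
            have hk2G : k2 ∈ G := (Finset.mem_filter.1 hk2mem).1
            have hk2lt : k2 < k := by
              have := (Finset.mem_filter.1 hk2mem).2
              simpa using this
            have hcardeq : (G.filter (· < k)).card = (G.filter (· < k2)).card + 1 := by
              have hset : G.filter (· < k) = insert k2 (G.filter (· < k2)) := by
                ext x
                simp only [Finset.mem_filter, Finset.mem_insert, decide_eq_true_eq]
                constructor
                · rintro ⟨hxG, hxk⟩
                  rcases eq_or_ne x k2 with rfl | hne'
                  · left; rfl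
                  · right
                    refine ⟨hxG, ?_⟩
                    have : x ≤ k2 :=
                      hk2max x (Finset.mem_filter.2 ⟨hxG, by simpa using hxk⟩)
                    omega
                · rintro (rfl | ⟨hxG, hxk2⟩)
                  · exact ⟨hk2G, hk2lt⟩
                  · exact ⟨hxG, by omega⟩
              rw [hset, Finset.card_insert_of_notMem]
              simp
            -- k2 + d ≤ k since same residue and k2 < k
            have hmod1 : k % d = j := hGmod k hkG
            have hmod2 : k2 % d = j := hGmod k2 hk2G
            have hdvd : d ∣ k - k2 :=
              (Nat.modEq_iff_dvd' (le_of_lt hk2lt)).1 (hmod2.trans hmod1.symm)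
            have hdle : k2 + d ≤ k := by
              have := Nat.le_of_dvd (by omega) hdvd
              omega
            have hchain := chain k2 k (hGS k2 hk2G) (hGS k hkG) hdle
            have hih := ihk k2 hk2lt hk2G
            rw [hcardeq, pow_succ]
            have hpownn : (0:ℝ) ≤ (2:ℝ) ^ ((G.filter (· < k2)).card) := by positivity
            nlinarith
      have hmB : ∀ k ∈ G, (G.filter (· < k)).card ≤ B := by
        intro k hkG
        have h1 := hpow k hkG
        have hkS := hGS k hkG
        have hkL := hkS.2.2
        set m := (G.filter (· < k)).card with hm
        have h2 : (2:ℝ)^m * (ε * (numPhases 1 r : ℝ)) ≤ (numPhases 1 r : ℝ) := by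
          have hpownn : (0:ℝ) ≤ (2:ℝ)^m := by positivity
          nlinarith
        have h3 : (2:ℝ)^m ≤ 1/ε := by
          rw [le_div_iff₀ hε]
          nlinarith
        have h4 : (m:ℝ) ≤ Real.logb 2 (1/ε) := by
          have := (Real.logb_le_logb (by norm_num : (1:ℝ) < 2)
            (by positivity : (0:ℝ) < (2:ℝ)^m) (by linarith : (0:ℝ) < 1/ε)).2 h3
          rwa [Real.logb_pow, Real.logb_self_eq_one (by norm_num), mul_one] at this
        exact Nat.le_floor h4
      -- injectivity of the counting map
      have hinj : Set.InjOn (fun k => (G.filter (· < k)).card) ↑G := by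
        intro x hx y hy hxy
        simp only [Finset.mem_coe] at hx hy
        by_contra hne
        have hmono : ∀ u v, u ∈ G → v ∈ G → u < v →
            (G.filter (· < u)).card < (G.filter (· < v)).card := by
          intro u v huG hvG huv
          apply Finset.card_lt_card
          rw [Finset.ssubset_iff_of_subset]
          · exact ⟨u, Finset.mem_filter.2 ⟨huG, by simpa using huv⟩,
              fun hc => by simp at hc⟩
          · intro z hz
            rw [Finset.mem_filter] at hz ⊢
            refine ⟨hz.1, ?_⟩
            have := hz.2
            change z < u at this; change z < v
            omega
        rcases lt_trichotomy x y with h | h | h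
        · have := hmono x y hx hy h
          simp only at hxy
          omega
        · exact hne h
        · have := hmono y x hy hx h
          simp only at hxy
          omega
      have hmaps : ∀ k ∈ G, (fun k => (G.filter (· < k)).card) k ∈ Finset.range (B+1) :=
        fun k hk => Finset.mem_range.2 (Nat.lt_succ_of_le (hmB k hk))
      have hcard := Finset.card_le_card_of_injOn
        (fun k => (G.filter (· < k)).card) hmaps hinj
      simpa using hcard
    -- sum over residue classes
    have hcount : F.card = ∑ j ∈ Finset.range d, (F.filter (fun k => k % d = j)).card :=
      Finset.card_eq_sum_card_fiberwise
        (fun x _ => Finset.mem_range.2 (Nat.mod_lt _ (by omega)))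
    have htot : F.card ≤ d * (B + 1) := by
      rw [hcount]
      calc ∑ j ∈ Finset.range d, (F.filter (fun k => k % d = j)).card
          ≤ (Finset.range d).card • (B + 1) :=
            Finset.sum_le_card_nsmul _ _ _ (fun j _ => fib j)
        _ = d * (B + 1) := by rw [Finset.card_range]; simp
    -- conclude in the reals
    have hBlog : (B:ℝ) ≤ Real.logb (4/3) (1/ε) := by
      have h1 : (B:ℝ) ≤ Real.logb 2 (1/ε) :=
        Nat.floor_le (Real.logb_nonneg (by norm_num) hinv)
      have h2 : Real.logb 2 (1/ε) ≤ Real.logb (4/3) (1/ε) := by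
        unfold Real.logb
        apply div_le_div_of_nonneg_left (Real.log_nonneg hinv)
          (Real.log_pos (by norm_num))
        exact Real.log_le_log (by norm_num) (by norm_num)
      linarith
    calc (F.card : ℝ) ≤ (d : ℝ) * ((B : ℝ) + 1) := by exact_mod_cast htot
      _ ≤ (d : ℝ) * (1 + Real.logb (4/3) (1/ε)) := by
          apply mul_le_mul_of_nonneg_left _ (Nat.cast_nonneg _)
          linarith
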